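/- If (X, d) is a compact strictly quasihypermetric space, then there exists at most one d-invariant measure in M₁(X): if μ, ν ∈ M₁(X) each have constant d-potential (d_μ ≡ c₁, d_ν ≡ c₂ for constants c₁, c₂), then μ = ν. -/

import Mathlib

open MeasureTheory

/-- Integral of a function against a finite signed Borel measure, via Jordan decomposition. -/
noncomputable def sInt {X : Type*} [MeasurableSpace X] (μ : SignedMeasure X) (f : X → ℝ) : ℝ :=
  (∫ x, f x ∂μ.toJordanDecomposition.posPart) - ∫ x, f x ∂μ.toJordanDecomposition.negPart

/-- Energy `I(μ, ν) = ∫∫ d(x,y) dμ(x) dν(y)` with respect to a kernel `d`. -/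
noncomputable def en {X : Type*} [MeasurableSpace X] (d : X → X → ℝ)
    (μ ν : SignedMeasure X) : ℝ :=
  sInt μ (fun x => sInt ν (fun y => d x y))

/-- The potential `d_μ(x) = ∫ d(x,y) dμ(y)`. -/
noncomputable def dPot {X : Type*} [MeasurableSpace X] (d : X → X → ℝ)
    (μ : SignedMeasure X) (x : X) : ℝ :=
  sInt μ (fun y => d x y)

/-- The set of energies `I(μ)` of signed Borel measures of total mass one. -/
noncomputable def MSet (X : Type*) [MetricSpace X] [MeasurableSpace X] : Set ℝ :=
  {r | ∃ μ : SignedMeasure X, μ Set.univ = (1 : ℝ) ∧ en (fun x y => dist x y) μ μ = r}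

lemma sInt_const {X : Type*} [MeasurableSpace X] (μ : SignedMeasure X) (c : ℝ) :
    sInt μ (fun _ => c) = c * μ Set.univ := by
  have h := congrArg (fun s : SignedMeasure X => s Set.univ)
    (μ.toSignedMeasure_toJordanDecomposition)
  simp only [JordanDecomposition.toSignedMeasure, VectorMeasure.sub_apply,
    Measure.toSignedMeasure_apply_measurable MeasurableSet.univ] at h
  simp only [sInt, integral_const, smul_eq_mul]
  rw [← h]
  ring

lemma measure_key {X : Type*} [MeasurableSpace X] (μ ν : SignedMeasure X) :
    (μ - ν).toJordanDecomposition.posPart + μ.toJordanDecomposition.negPart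
      + ν.toJordanDecomposition.posPart
    = (μ - ν).toJordanDecomposition.negPart + μ.toJordanDecomposition.posPart
      + ν.toJordanDecomposition.negPart := by
  ext s hs
  have h1 := congrArg (fun t : SignedMeasure X => t s) (μ - ν).toSignedMeasure_toJordanDecomposition
  have h2 := congrArg (fun t : SignedMeasure X => t s) μ.toSignedMeasure_toJordanDecomposition
  have h3 := congrArg (fun t : SignedMeasure X => t s) ν.toSignedMeasure_toJordanDecomposition
  simp only [JordanDecomposition.toSignedMeasure, VectorMeasure.sub_apply,
    Measure.toSignedMeasure_apply_measurable hs] at h1 h2 h3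
  rw [← h2, ← h3] at h1
  simp only [Measure.add_apply]
  have fin : ∀ (ρ : Measure X) [IsFiniteMeasure ρ], ρ s ≠ ⊤ := fun ρ _ => measure_ne_top ρ s
  have : ((μ - ν).toJordanDecomposition.posPart s).toReal + (μ.toJordanDecomposition.negPart s).toReal
      + (ν.toJordanDecomposition.posPart s).toReal
      = ((μ - ν).toJordanDecomposition.negPart s).toReal + (μ.toJordanDecomposition.posPart s).toReal
      + (ν.toJordanDecomposition.negPart s).toReal := by simp only [measureReal_def] at h1; linarith
  have := congrArg ENNReal.ofReal this
  rwa [ENNReal.ofReal_add (by positivity) ENNReal.toReal_nonneg,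
    ENNReal.ofReal_add (by positivity) ENNReal.toReal_nonneg,
    ENNReal.ofReal_add (by positivity) ENNReal.toReal_nonneg,
    ENNReal.ofReal_add (by positivity) ENNReal.toReal_nonneg,
    ENNReal.ofReal_toReal (fin _), ENNReal.ofReal_toReal (fin _),
    ENNReal.ofReal_toReal (fin _), ENNReal.ofReal_toReal (fin _),
    ENNReal.ofReal_toReal (fin _), ENNReal.ofReal_toReal (fin _)] at this

lemma sInt_sub {X : Type*} [MetricSpace X] [CompactSpace X] [MeasurableSpace X] [BorelSpace X]
    (μ ν : SignedMeasure X) {f : X → ℝ} (hf : Continuous f) :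
    sInt (μ - ν) f = sInt μ f - sInt ν f := by
  have hi : ∀ (ρ : Measure X) [IsFiniteMeasure ρ], Integrable f ρ := fun ρ _ =>
    hf.integrable_of_hasCompactSupport (HasCompactSupport.of_compactSpace f)
  have key := congrArg (fun ρ : Measure X => ∫ x, f x ∂ρ) (measure_key μ ν)
  simp only [integral_add_measure ((hi _).add_measure (hi _)) (hi _),
    integral_add_measure (hi _) (hi _)] at key
  simp only [sInt]
  linarith

/-- In a compact strictly quasihypermetric space there is at most one `d`-invariant
mass-one measure. -/
theorem stmt3 {X : Type*} [MetricSpace X] [CompactSpace X] [MeasurableSpace X] [BorelSpace X]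
    (hq : ∀ φ : SignedMeasure X, φ Set.univ = (0 : ℝ) →
      en (fun x y => dist x y) φ φ ≤ 0 ∧ (en (fun x y => dist x y) φ φ = 0 → φ = 0))
    (μ ν : SignedMeasure X) (hμ : μ Set.univ = (1 : ℝ)) (hν : ν Set.univ = (1 : ℝ))
    (c₁ c₂ : ℝ)
    (h1 : ∀ x : X, dPot (fun x y => dist x y) μ x = c₁)
    (h2 : ∀ x : X, dPot (fun x y => dist x y) ν x = c₂) :
    μ = ν := by
  set φ := μ - ν with hφ
  have hφ0 : φ Set.univ = (0 : ℝ) := by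
    rw [hφ, VectorMeasure.sub_apply, hμ, hν]; ring
  have hpot : ∀ x : X, dPot (fun x y => dist x y) φ x = c₁ - c₂ := by
    intro x
    have : Continuous fun y => dist x y := continuous_const.dist continuous_id
    rw [hφ]
    show sInt (μ - ν) (fun y => dist x y) = c₁ - c₂
    rw [sInt_sub μ ν this]
    rw [show sInt μ (fun y => dist x y) = c₁ from h1 x,
        show sInt ν (fun y => dist x y) = c₂ from h2 x]
  have hen : en (fun x y => dist x y) φ φ = 0 := by
    have : (fun x => sInt φ (fun y => dist x y)) = fun _ : X => c₁ - c₂ :=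
      funext fun x => hpot x
    rw [en, this, sInt_const, hφ0, mul_zero]
  have := (hq φ hφ0).2 hen
  rw [hφ] at this
  exact sub_eq_zero.mp this
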